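/- Let (U^i e)_{i∈ℤ} be an orthonormal martingale difference sequence (‖e‖₂ = 1) and V ≥ 1. For f_V = e - (1/V) ∑_{i=1}^{V} U^{-i} e and S_n(f_V) = ∑_{j=0}^{n-1} U^j f_V, one has ‖S_n(f_V)‖₂ ≤ √(2n) for all n ≥ 1. -/

import Mathlib

open MeasureTheory Finset
open scoped RealInnerProductSpace

section aux

variable {E : Type*} [NormedAddCommGroup E] [InnerProductSpace ℝ E]

lemma aux_norm_sq_sum {v : ℤ → E} (hON : Orthonormal ℝ v) {ι : Type*}
    (s : Finset ι) (k : ι → ℤ) (hk : Set.InjOn k ↑s) :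
    ⟪∑ x ∈ s, v (k x), ∑ x ∈ s, v (k x)⟫ = s.card := by
  classical
  have hvv : ∀ a b, ⟪v a, v b⟫ = if a = b then 1 else 0 := by
    intro a b
    rcases eq_or_ne a b with h | h
    · simp [h, hON.1 b, real_inner_self_eq_norm_sq]
    · simp [h, hON.2 h]
  rw [sum_inner]
  have h1 : ∀ x ∈ s, ⟪v (k x), ∑ y ∈ s, v (k y)⟫ = 1 := by
    intro x hx
    rw [inner_sum]
    have h2 : ∀ y ∈ s, ⟪v (k x), v (k y)⟫ = if y = x then 1 else 0 := by
      intro y hy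
      rw [hvv]
      congr 1
      simp only [eq_iff_iff]
      constructor
      · intro h; exact hk hy hx h.symm
      · intro h; rw [h]
    rw [Finset.sum_congr rfl h2, Finset.sum_ite_eq' s x (fun _ => (1:ℝ))]
    simp [hx]
  rw [Finset.sum_congr rfl h1]
  simp

end aux

/-- For `f_V = e - (1/V) ∑_{i=1}^{V} U^{-i} e` built over an orthonormal family `(U^i e)`,
`‖S_n(f_V)‖₂ ≤ √(2n)`. -/
theorem stmt10 {Ω : Type*} [MeasurableSpace Ω] (μ : Measure Ω) [IsProbabilityMeasure μ]
    (U : Lp ℝ 2 μ ≃ₗᵢ[ℝ] Lp ℝ 2 μ)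
    (T : Ω → Ω) (hT : MeasurePreserving T μ μ)
    (hU : ∀ (h : Lp ℝ 2 μ), (U h : Ω → ℝ) =ᵐ[μ] fun ω => h (T ω))
    (e : Lp ℝ 2 μ) (hON : Orthonormal ℝ (fun i : ℤ => (U ^ i) e))
    (V : ℕ) (hV : 1 ≤ V) (n : ℕ) (hn : 1 ≤ n) :
    ‖∑ j ∈ Finset.range n,
        (U ^ (j : ℤ)) (e - (V : ℝ)⁻¹ • ∑ i ∈ Finset.Icc 1 V, (U ^ (-(i : ℤ))) e)‖
      ≤ Real.sqrt (2 * n) := by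
  set v : ℤ → Lp ℝ 2 μ := fun i => (U ^ i) e with hv
  have hvv : ∀ a b, ⟪v a, v b⟫ = if a = b then 1 else 0 := by
    intro a b
    rcases eq_or_ne a b with h | h
    · simp [h, hON.1 b, real_inner_self_eq_norm_sq]
    · simp [h, hON.2 h]
  set A : Lp ℝ 2 μ := ∑ j ∈ Finset.range n, v (j : ℤ) with hA
  set B : Lp ℝ 2 μ := ∑ j ∈ Finset.range n, ∑ i ∈ Finset.Icc 1 V, v ((j : ℤ) - i) with hB
  set c : ℝ := (V : ℝ)⁻¹ with hc
  have hcpos : (0:ℝ) < (V:ℝ) := by exact_mod_cast hV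
  have hc0 : 0 ≤ c := by rw [hc]; positivity
  -- rewrite the sum as A - c • B
  have hterm : ∀ j : ℕ,
      (U ^ (j : ℤ)) (e - (V : ℝ)⁻¹ • ∑ i ∈ Finset.Icc 1 V, (U ^ (-(i : ℤ))) e)
      = v (j : ℤ) - c • ∑ i ∈ Finset.Icc 1 V, v ((j : ℤ) - i) := by
    intro j
    rw [map_sub, _root_.map_smul, map_sum, hc]
    congr 2
    refine Finset.sum_congr rfl fun i _ => ?_
    show (U ^ (j : ℤ)) ((U ^ (-(i : ℤ))) e) = v ((j : ℤ) - i)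
    rw [hv]
    simp only [sub_eq_add_neg, zpow_add]
    rfl
  have hS : (∑ j ∈ Finset.range n,
        (U ^ (j : ℤ)) (e - (V : ℝ)⁻¹ • ∑ i ∈ Finset.Icc 1 V, (U ^ (-(i : ℤ))) e))
      = A - c • B := by
    rw [Finset.sum_congr rfl (fun j _ => hterm j), Finset.sum_sub_distrib,
      ← Finset.smul_sum, ← hA, ← hB]
  rw [hS]
  -- ‖A‖² = n
  have hA2 : ⟪A, A⟫ = (n : ℝ) := by
    have := aux_norm_sq_sum hON (Finset.range n) (fun j => (j : ℤ))
      (fun a _ b _ h => by simp only at h; exact_mod_cast h)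
    simpa using this
  -- for each i, ‖∑_j v(j-i)‖ = √n
  have hBi : ∀ i : ℕ, ‖∑ j ∈ Finset.range n, v ((j : ℤ) - i)‖ = Real.sqrt n := by
    intro i
    have := aux_norm_sq_sum hON (Finset.range n) (fun j => (j : ℤ) - i)
      (fun a _ b _ h => by simp only [sub_left_inj] at h; exact_mod_cast h)
    rw [real_inner_self_eq_norm_sq] at this
    simp only [Finset.card_range] at this
    rw [← this, Real.sqrt_sq (norm_nonneg _)]
  -- ‖B‖ ≤ V √n
  have hBnorm : ‖B‖ ≤ V * Real.sqrt n := by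
    rw [hB, Finset.sum_comm]
    calc ‖∑ i ∈ Finset.Icc 1 V, ∑ j ∈ Finset.range n, v ((j : ℤ) - i)‖
        ≤ ∑ i ∈ Finset.Icc 1 V, ‖∑ j ∈ Finset.range n, v ((j : ℤ) - i)‖ :=
          norm_sum_le _ _
      _ = ∑ i ∈ Finset.Icc 1 V, Real.sqrt n := Finset.sum_congr rfl fun i _ => hBi i
      _ = V * Real.sqrt n := by rw [Finset.sum_const, Nat.card_Icc]; simp
  -- ⟪A, B⟫ ≥ 0
  have hAB : 0 ≤ ⟪A, B⟫ := by
    rw [hA, hB, sum_inner]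
    refine Finset.sum_nonneg fun j _ => ?_
    rw [inner_sum]
    refine Finset.sum_nonneg fun j' _ => ?_
    rw [inner_sum]
    refine Finset.sum_nonneg fun i _ => ?_
    rw [hvv]
    positivity
  -- norm squared bound
  have hsq : ‖A - c • B‖ ^ 2 ≤ 2 * (n : ℝ) := by
    rw [norm_sub_sq_real]
    have h1 : ‖A‖ ^ 2 = (n : ℝ) := by rw [← real_inner_self_eq_norm_sq, hA2]
    have h2 : ⟪A, c • B⟫ = c * ⟪A, B⟫ := real_inner_smul_right A B c
    have h3 : ‖c • B‖ ^ 2 ≤ (n : ℝ) := by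
      rw [norm_smul]
      have hnc : ‖c‖ = (V : ℝ)⁻¹ := by
        rw [hc, Real.norm_eq_abs, abs_of_nonneg (by positivity)]
      rw [hnc]
      have hBn : (V : ℝ)⁻¹ * ‖B‖ ≤ Real.sqrt n := by
        rw [inv_mul_le_iff₀ hcpos]
        exact hBnorm
      calc ((V : ℝ)⁻¹ * ‖B‖) ^ 2 ≤ Real.sqrt n ^ 2 := by
            apply pow_le_pow_left₀ (by positivity) hBn
        _ = (n : ℝ) := Real.sq_sqrt (by positivity)
    have h4 : 0 ≤ 2 * ⟪A, c • B⟫ := by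
      rw [h2]
      have := mul_nonneg hc0 hAB
      linarith
    linarith
  calc ‖A - c • B‖ = Real.sqrt (‖A - c • B‖ ^ 2) := by
        rw [Real.sqrt_sq (norm_nonneg _)]
    _ ≤ Real.sqrt (2 * n) := Real.sqrt_le_sqrt hsq
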